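/- Conversely, if Ā is Hurwitz, ĀᵀP + PĀ = -Q ≤ 0 with P = Pᵀ > 0, and there exists a symmetric positive definite P̃ with ĀᵀP̃ + P̃Ā < 0, then the symmetric matrix H := P̃ - P satisfies S_Qᵀ(ĀᵀH + HĀ)S_Q < 0, where the columns of S_Q are an orthonormal basis of ker Q. -/

import Mathlib

open Matrix

/-- converse of the Lyapunov modification lemma. -/
theorem lyapunov_modification_converse
    (n r : ℕ)
    (Abar P Q Ptilde : Matrix (Fin n) (Fin n) ℝ)
    (hHurwitz : ∀ z ∈ spectrum ℂ (Abar.map (Complex.ofReal)), z.re < 0)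
    (hPpd : P.PosDef)
    (hLyap : Abarᵀ * P + P * Abar = -Q)
    (hQpsd : Q.PosSemidef)
    (hPtsym : Ptildeᵀ = Ptilde)
    (hPtpd : Ptilde.PosDef)
    (hPtLyap : (-(Abarᵀ * Ptilde + Ptilde * Abar)).PosDef)
    (SQ : Matrix (Fin n) (Fin r) ℝ)
    (hOrth : SQᵀ * SQ = 1)
    (hKer : ∀ x : Fin n → ℝ, Q *ᵥ x = 0 ↔ ∃ c : Fin r → ℝ, x = SQ *ᵥ c) :
    (-(SQᵀ * (Abarᵀ * (Ptilde - P) + (Ptilde - P) * Abar) * SQ)).PosDef := by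
  set M := -(Abarᵀ * Ptilde + Ptilde * Abar) with hM
  -- Q * SQ = 0
  have hQS : Q * SQ = 0 := by
    ext i j
    have h0 : Q *ᵥ (SQ *ᵥ Pi.single j 1) = 0 := (hKer _).mpr ⟨Pi.single j 1, rfl⟩
    have : (Q * SQ) *ᵥ Pi.single j 1 = 0 := by rwa [← mulVec_mulVec]
    have := congrFun this i
    simpa [mulVec, dotProduct, Pi.single_apply] using this
  have hSQS : SQᵀ * Q * SQ = 0 := by
    rw [Matrix.mul_assoc, hQS, Matrix.mul_zero]
  -- rewrite the target matrix
  have key : -(SQᵀ * (Abarᵀ * (Ptilde - P) + (Ptilde - P) * Abar) * SQ) = SQᵀ * M * SQ := by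
    have h1 : Abarᵀ * (Ptilde - P) + (Ptilde - P) * Abar
        = (Abarᵀ * Ptilde + Ptilde * Abar) - (Abarᵀ * P + P * Abar) := by noncomm_ring
    rw [h1, hLyap, hM]
    have h2 : SQᵀ * ((Abarᵀ * Ptilde + Ptilde * Abar) - -Q) * SQ
        = SQᵀ * (Abarᵀ * Ptilde + Ptilde * Abar) * SQ + SQᵀ * Q * SQ := by
      rw [sub_neg_eq_add, Matrix.mul_add, Matrix.add_mul, Matrix.mul_assoc SQᵀ Q SQ,
        ← Matrix.mul_assoc SQᵀ Q SQ]
    rw [h2, hSQS, add_zero, Matrix.mul_neg, Matrix.neg_mul]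
  rw [key]
  refine posDef_iff_dotProduct_mulVec.mpr ⟨?_, ?_⟩
  · have hMh : Mᴴ = M := hPtLyap.1
    show (SQᵀ * M * SQ)ᴴ = _
    rw [conjTranspose_mul, conjTranspose_mul, hMh]
    have : SQᵀᴴ = SQ := by ext i j; simp [conjTranspose_apply]
    rw [this]
    have : SQᴴ = SQᵀ := by ext i j; simp [conjTranspose_apply]
    rw [this, Matrix.mul_assoc]
  · intro x hx
    have hSx : SQ *ᵥ x ≠ 0 := by
      intro h
      apply hx
      have : SQᵀ *ᵥ (SQ *ᵥ x) = 0 := by rw [h, mulVec_zero]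
      rwa [mulVec_mulVec, hOrth, one_mulVec] at this
    have := (posDef_iff_dotProduct_mulVec.mp hPtLyap).2 hSx
    have heq : star x ⬝ᵥ (SQᵀ * M * SQ) *ᵥ x
        = star (SQ *ᵥ x) ⬝ᵥ M *ᵥ (SQ *ᵥ x) := by
      simp only [star_trivial, ← mulVec_mulVec]
      rw [dotProduct_mulVec, vecMul_transpose]
    rwa [heq]
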